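/- Let P be a polynomial over F₂ with P(0) = 1 and deg(P) ≥ 1, let D = ord(P) be the least positive integer with P dividing 1 + q^D, and let P* be the polynomial with P·P* = 1 + q^D. Let P̄ = {n ∈ ℕ : f̄_n = 1}, where Σ f̄_n qⁿ is the inverse of P in F₂[[q]]. Then the natural density of P̄ exists and equals ℓ(P*)/ord(P), where ℓ(P*) is the number of nonzero coefficients of P*. -/

import Mathlib

/-- Let `P ∈ F₂[q]` with `P(0) = 1` and `deg P ≥ 1`, let `D = ord(P)` be the least
positive integer with `P ∣ 1 + q^D`, and let `P*` satisfy `P ⬝ P* = 1 + q^D`.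
Let `G = Σ f̄_n qⁿ` be the inverse of `P` in `F₂[[q]]`.  Then the natural density of
`P̄ = {n : f̄_n = 1}` exists and equals `ℓ(P*)/ord(P)`, where `ℓ(P*)` is the number of
nonzero coefficients of `P*`. -/
theorem stmt8 (P Pstar : Polynomial (ZMod 2)) (hP0 : P.coeff 0 = 1) (hPdeg : 1 ≤ P.natDegree)
    (D : ℕ) (hD1 : 1 ≤ D) (hDdvd : P ∣ (1 + Polynomial.X ^ D))
    (hDmin : ∀ e : ℕ, 1 ≤ e → P ∣ (1 + Polynomial.X ^ e) → D ≤ e)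
    (hPstar : P * Pstar = 1 + Polynomial.X ^ D)
    (G : PowerSeries (ZMod 2)) (hG : (P : PowerSeries (ZMod 2)) * G = 1) :
    Filter.Tendsto
      (fun n : ℕ =>
        (((Finset.range (n + 1)).filter fun k => PowerSeries.coeff k G = 1).card : ℝ)
          / (n + 1))
      Filter.atTop (nhds ((Pstar.support.card : ℝ) / D)) := by
  have hadd : ∀ a b : ZMod 2, a + b = 0 → a = b := by decide
  -- degree of 1 + X^D
  have hQdeg : ((1 : Polynomial (ZMod 2)) + Polynomial.X ^ D).natDegree = D := by
    have h : (1 : Polynomial (ZMod 2)) + Polynomial.X ^ D = Polynomial.X ^ D + Polynomial.C 1 := by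
      rw [Polynomial.C_1]; ring
    rw [h, Polynomial.natDegree_X_pow_add_C]
  have hPne : P ≠ 0 := fun h => by simp [h] at hP0
  have hQne : (1 : Polynomial (ZMod 2)) + Polynomial.X ^ D ≠ 0 := by
    intro h
    rw [h] at hQdeg
    simp at hQdeg
    omega
  have hPstarne : Pstar ≠ 0 := by
    intro h
    rw [h, mul_zero] at hPstar
    exact hQne hPstar.symm
  have hdegstar : Pstar.natDegree < D := by
    have h := Polynomial.natDegree_mul hPne hPstarne
    rw [hPstar, hQdeg] at h
    omega
  -- key identity: (1 + X^D) * G = Pstar  (as power series)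
  have hkey : ((1 : PowerSeries (ZMod 2)) + PowerSeries.X ^ D) * G = (Pstar : PowerSeries (ZMod 2)) := by
    have h1 : ((P : PowerSeries (ZMod 2)) * (Pstar : PowerSeries (ZMod 2))) * G
        = ((1 : PowerSeries (ZMod 2)) + PowerSeries.X ^ D) * G := by
      rw [← Polynomial.coe_mul, hPstar]
      push_cast
      ring_nf
    calc ((1 : PowerSeries (ZMod 2)) + PowerSeries.X ^ D) * G
        = ((P : PowerSeries (ZMod 2)) * (Pstar : PowerSeries (ZMod 2))) * G := h1.symm
      _ = (Pstar : PowerSeries (ZMod 2)) * ((P : PowerSeries (ZMod 2)) * G) := by ring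
      _ = (Pstar : PowerSeries (ZMod 2)) := by rw [hG, mul_one]
  -- coefficient recurrences
  have hcoeff : ∀ k, PowerSeries.coeff k G
      + PowerSeries.coeff k (PowerSeries.X ^ D * G) = Pstar.coeff k := by
    intro k
    have := congrArg (PowerSeries.coeff k) hkey
    simpa [add_mul, Polynomial.coeff_coe] using this
  have hlow : ∀ k < D, PowerSeries.coeff k G = Pstar.coeff k := by
    intro k hk
    have h0 : PowerSeries.coeff k (PowerSeries.X ^ D * G) = 0 :=
      PowerSeries.X_pow_dvd_iff.mp ⟨G, rfl⟩ k hk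
    have := hcoeff k
    rw [h0, add_zero] at this
    exact this
  have hper : ∀ k, PowerSeries.coeff (k + D) G = PowerSeries.coeff k G := by
    intro k
    have h0 : Pstar.coeff (k + D) = 0 :=
      Polynomial.coeff_eq_zero_of_natDegree_lt (by omega)
    have h := hcoeff (k + D)
    rw [PowerSeries.coeff_X_pow_mul, h0] at h
    exact hadd _ _ h
  -- the predicate
  set p : ℕ → Prop := fun k => PowerSeries.coeff k G = 1 with hp
  have hpper : Function.Periodic p D := by
    intro k
    simp only [hp, hper k]
  set c : ℕ := Nat.count p D with hcdef
  have hcD : c ≤ D := by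
    rw [hcdef, Nat.count_eq_card_filter_range]
    exact le_trans (Finset.card_filter_le _ _) (le_of_eq (Finset.card_range D))
  -- c equals the support cardinality
  have hcsupp : Pstar.support.card = c := by
    have hsupp : Pstar.support = (Finset.range D).filter p := by
      ext k
      simp only [Polynomial.mem_support_iff, Finset.mem_filter, Finset.mem_range, hp]
      constructor
      · intro hk
        have hkD : k < D := lt_of_le_of_lt (Polynomial.le_natDegree_of_ne_zero hk) hdegstar
        refine ⟨hkD, ?_⟩
        rw [hlow k hkD]
        have : ∀ a : ZMod 2, a ≠ 0 → a = 1 := by decide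
        exact this _ hk
      · rintro ⟨hkD, hk⟩
        rw [hlow k hkD] at hk
        rw [hk]
        exact one_ne_zero
    rw [hsupp, hcdef, Nat.count_eq_card_filter_range]
  -- counting over multiples of D
  have hmul : ∀ j : ℕ, ((Finset.range (D * j)).filter p).card = j * c := by
    intro j
    induction j with
    | zero => simp
    | succ j ih =>
      have hsplit : Finset.range (D * (j + 1)) =
          Finset.range (D * j) ∪ Finset.Ico (D * j) (D * j + D) := by
        rw [Finset.range_eq_Ico, Finset.range_eq_Ico, Nat.mul_succ]
        exact (Finset.Ico_union_Ico_eq_Ico (Nat.zero_le _) (Nat.le_add_right _ _)).symm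
      rw [hsplit, Finset.filter_union, Finset.card_union_of_disjoint, ih,
        Nat.filter_Ico_card_eq_of_periodic _ _ p hpper]
      · ring
      · exact Finset.disjoint_filter_filter (by
          rw [Finset.range_eq_Ico]; exact Finset.Ico_disjoint_Ico_consecutive 0 (D * j) (D * j + D))
  -- bounds on counting in range m
  have hbound : ∀ m : ℕ, (m / D) * c ≤ ((Finset.range m).filter p).card ∧
      ((Finset.range m).filter p).card ≤ (m / D) * c + D := by
    intro m
    set j := m / D with hj
    have h1 : D * j ≤ m := Nat.mul_div_le m D
    have h2 : m < D * (j + 1) := Nat.lt_mul_div_succ m (by omega)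
    constructor
    · rw [← hmul j]
      exact Finset.card_le_card (Finset.filter_subset_filter _ (by
        intro x hx; simp only [Finset.mem_range] at *; omega))
    · calc ((Finset.range m).filter p).card
          ≤ ((Finset.range (D * (j + 1))).filter p).card :=
            Finset.card_le_card (Finset.filter_subset_filter _ (by
              intro x hx; simp only [Finset.mem_range] at *; omega))
        _ = (j + 1) * c := hmul (j + 1)
        _ ≤ j * c + D := by nlinarith
  -- pass to reals
  rw [← tendsto_sub_nhds_zero_iff]
  have hDR : (0 : ℝ) < D := by exact_mod_cast hD1
  apply squeeze_zero_norm (a := fun n : ℕ => (D : ℝ) / ((n : ℝ) + 1))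
  · intro n
    set m : ℕ := n + 1 with hm
    set f : ℕ := ((Finset.range m).filter p).card with hf
    set j : ℕ := m / D with hj
    have hb := hbound m
    have h1 : D * j ≤ m := Nat.mul_div_le m D
    have h2 : m < D * (j + 1) := Nat.lt_mul_div_succ m (by omega)
    have hmR : (0 : ℝ) < (n : ℝ) + 1 := by positivity
    have hmcast : ((m : ℕ) : ℝ) = (n : ℝ) + 1 := by push_cast [hm]; ring
    have hfR1 : (j : ℝ) * c ≤ f := by exact_mod_cast hb.1
    have hfR2 : (f : ℝ) ≤ j * c + D := by exact_mod_cast hb.2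
    have hmR1 : (D : ℝ) * j ≤ (n : ℝ) + 1 := by rw [← hmcast]; exact_mod_cast h1
    have hmR2 : (n : ℝ) + 1 < D * (j + 1) := by rw [← hmcast]; exact_mod_cast h2
    have hcR : (c : ℝ) ≤ D := by exact_mod_cast hcD
    have hcR0 : (0 : ℝ) ≤ c := Nat.cast_nonneg c
    have heq : (f : ℝ) / ((n : ℝ) + 1) - (Pstar.support.card : ℝ) / D
        = ((D : ℝ) * f - c * ((n : ℝ) + 1)) / (D * ((n : ℝ) + 1)) := by
      rw [hcsupp]
      field_simp
    rw [Real.norm_eq_abs, heq, abs_div, abs_of_pos (mul_pos hDR hmR)]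
    have hnum : |(D : ℝ) * f - c * ((n : ℝ) + 1)| ≤ D * D := by
      rw [abs_le]
      constructor
      · nlinarith
      · nlinarith
    calc |(D : ℝ) * f - c * ((n : ℝ) + 1)| / (D * ((n : ℝ) + 1))
        ≤ (D * D) / (D * ((n : ℝ) + 1)) := by gcongr
      _ = (D : ℝ) / ((n : ℝ) + 1) := mul_div_mul_left _ _ (ne_of_gt hDR)
  · have h := (tendsto_const_div_atTop_nhds_zero_nat (D : ℝ)).comp (Filter.tendsto_add_atTop_nat 1)
    refine h.congr fun n => ?_
    simp only [Function.comp_apply]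
    push_cast
    ring
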